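/- Let (F, G) be a dual pair of N-element families in an n-dimensional complex inner product space H and let p ≥ 1. Then the 1-erasure spectral average error satisfies AE_R^{(1),p}(F,G) = ((1/N) ∑_{i=1}^N |⟨f_i, g_i⟩|^p)^{1/p} ≥ n/N. -/

import Mathlib

open scoped ComplexInnerProductSpace

theorem stmt_2 {H : Type*} [NormedAddCommGroup H] [InnerProductSpace ℂ H]
    [FiniteDimensional ℂ H] (n N : ℕ) (hn : Module.finrank ℂ H = n)
    (f g : Fin N → H)
    (hdual : ∀ x : H, x = ∑ i, ⟪f i, x⟫ • g i)
    (p : ℝ) (hp : 1 ≤ p) :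
    (n : ℝ) / N ≤ ((1 / (N : ℝ)) * ∑ i, ‖⟪g i, f i⟫‖ ^ p) ^ (1 / p) := by
  have hp0 : (0 : ℝ) < p := lt_of_lt_of_le one_pos hp
  rcases Nat.eq_zero_or_pos N with hN | hN
  · subst hN
    have hsub : Subsingleton H := by
      constructor
      intro x y
      have hx := hdual x
      have hy := hdual y
      simp at hx hy
      rw [hx, hy]
    have hn0 : n = 0 := by
      rw [← hn]
      exact Module.finrank_zero_of_subsingleton
    subst hn0
    simp only [Nat.cast_zero, div_zero, Finset.univ_eq_empty, Finset.sum_empty, mul_zero]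
    positivity
  · have hNpos : (0 : ℝ) < N := by exact_mod_cast hN
    -- trace identity: ∑ ⟪f i, g i⟫ = n
    set b := stdOrthonormalBasis ℂ H with hb
    have htr : (∑ i, ⟪f i, g i⟫) = (n : ℂ) := by
      have h1 : ∀ j, (⟪b j, b j⟫ : ℂ) = ∑ i, ⟪f i, b j⟫ * ⟪b j, g i⟫ := by
        intro j
        have h := congrArg (fun y => (inner ℂ (b j) y : ℂ)) (hdual (b j))
        simp only [inner_sum, inner_smul_right] at h
        exact h
      calc (∑ i, ⟪f i, g i⟫) = ∑ i, ∑ j, ⟪f i, b j⟫ * ⟪b j, g i⟫ := by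
            refine Finset.sum_congr rfl fun i _ => ?_
            rw [b.sum_inner_mul_inner]
        _ = ∑ j, ∑ i, ⟪f i, b j⟫ * ⟪b j, g i⟫ := Finset.sum_comm
        _ = ∑ j : Fin (Module.finrank ℂ H), (⟪b j, b j⟫ : ℂ) := by
            exact Finset.sum_congr rfl fun j _ => (h1 j).symm
        _ = (n : ℂ) := by
            simp [orthonormal_iff_ite.mp b.orthonormal, hn]
    have hkey : (n : ℝ) ≤ ∑ i, ‖⟪g i, f i⟫‖ := by
      calc (n : ℝ) = ‖(n : ℂ)‖ := by simp
        _ = ‖∑ i, ⟪f i, g i⟫‖ := by rw [htr]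
        _ ≤ ∑ i, ‖⟪f i, g i⟫‖ := norm_sum_le _ _
        _ = ∑ i, ‖⟪g i, f i⟫‖ := by
            refine Finset.sum_congr rfl fun i _ => ?_
            exact norm_inner_symm (f i) (g i)
    -- power mean inequality
    have hmean := Real.arith_mean_le_rpow_mean Finset.univ (fun _ : Fin N => 1 / (N : ℝ))
      (fun i => ‖⟪g i, f i⟫‖) (fun i _ => by positivity)
      (by simp; field_simp) (fun i _ => norm_nonneg _) hp
    have h2 : (n : ℝ) / N ≤ ∑ i : Fin N, (1 / (N : ℝ)) * ‖⟪g i, f i⟫‖ := by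
      rw [← Finset.mul_sum]
      rw [div_eq_mul_inv, mul_comm]
      calc (N : ℝ)⁻¹ * n ≤ (N : ℝ)⁻¹ * ∑ i, ‖⟪g i, f i⟫‖ := by
            exact mul_le_mul_of_nonneg_left hkey (by positivity)
        _ = 1 / (N : ℝ) * ∑ i, ‖⟪g i, f i⟫‖ := by rw [one_div]
    calc (n : ℝ) / N ≤ ∑ i : Fin N, (1 / (N : ℝ)) * ‖⟪g i, f i⟫‖ := h2
      _ ≤ (∑ i : Fin N, (1 / (N : ℝ)) * ‖⟪g i, f i⟫‖ ^ p) ^ (1 / p) := hmean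
      _ = ((1 / (N : ℝ)) * ∑ i, ‖⟪g i, f i⟫‖ ^ p) ^ (1 / p) := by rw [Finset.mul_sum]
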